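/- Let q be a power of an odd prime and let g be an element of SL(2,F_q) of order 4. Then there exists a subgroup H of SL(2,F_q) containing g such that H is isomorphic to SL(2,F_3). -/

import Mathlib

open Matrix

namespace SL2F3Aux

/-! ### Combinatorial data: SL(2,3) as the Hurwitz units, verified by `decide` -/

abbrev M3 := Matrix (Fin 2) (Fin 2) (ZMod 3)

def I3 : M3 := !![0, -1; 1, 0]
def J3 : M3 := !![1, 1; 1, -1]

def toM (t : ℤ × ℤ × ℤ × ℤ) : M3 :=
  (2 : ZMod 3) • ((t.1 : ZMod 3) • 1 + (t.2.1 : ZMod 3) • I3 + (t.2.2.1 : ZMod 3) • J3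
    + (t.2.2.2 : ZMod 3) • (I3 * J3))

def unitList : List (ℤ × ℤ × ℤ × ℤ) :=
  [(2,0,0,0),(-2,0,0,0),(0,2,0,0),(0,-2,0,0),(0,0,2,0),(0,0,-2,0),(0,0,0,2),(0,0,0,-2),
   (1,1,1,1),(1,1,1,-1),(1,1,-1,1),(1,1,-1,-1),(1,-1,1,1),(1,-1,1,-1),(1,-1,-1,1),(1,-1,-1,-1),
   (-1,1,1,1),(-1,1,1,-1),(-1,1,-1,1),(-1,1,-1,-1),(-1,-1,1,1),(-1,-1,1,-1),(-1,-1,-1,1),(-1,-1,-1,-1)]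

def coeff (M : M3) : ℤ × ℤ × ℤ × ℤ := (unitList.find? (fun t => toM t = M)).getD (2,0,0,0)

def quatMul (s t : ℤ × ℤ × ℤ × ℤ) : ℤ × ℤ × ℤ × ℤ :=
  (s.1*t.1 - s.2.1*t.2.1 - s.2.2.1*t.2.2.1 - s.2.2.2*t.2.2.2,
   s.1*t.2.1 + s.2.1*t.1 + s.2.2.1*t.2.2.2 - s.2.2.2*t.2.2.1,
   s.1*t.2.2.1 + s.2.2.1*t.1 + s.2.2.2*t.2.1 - s.2.1*t.2.2.2,
   s.1*t.2.2.2 + s.2.2.2*t.1 + s.2.1*t.2.2.1 - s.2.2.1*t.2.1)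

abbrev SL3 := Matrix.SpecialLinearGroup (Fin 2) (ZMod 3)

set_option maxHeartbeats 8000000 in
lemma key_mul : ∀ M N : SL3, quatMul (coeff M.val) (coeff N.val)
    = (fun t => (2*t.1, 2*t.2.1, 2*t.2.2.1, 2*t.2.2.2)) (coeff (M*N).val) := by decide

set_option maxHeartbeats 8000000 in
lemma key_inj : ∀ M N : SL3, coeff M.val = coeff N.val → M.val = N.val := by decide

set_option maxHeartbeats 2000000 in
lemma key_inv : ∀ M : SL3, coeff (M⁻¹).val
    = ((coeff M.val).1, -(coeff M.val).2.1, -(coeff M.val).2.2.1, -(coeff M.val).2.2.2) := by decide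

set_option maxHeartbeats 2000000 in
lemma key_bound : ∀ M : SL3, (coeff M.val).1 ≤ 2 ∧ -2 ≤ (coeff M.val).1 ∧
    (coeff M.val).2.1 ≤ 2 ∧ -2 ≤ (coeff M.val).2.1 ∧
    (coeff M.val).2.2.1 ≤ 2 ∧ -2 ≤ (coeff M.val).2.2.1 ∧
    (coeff M.val).2.2.2 ≤ 2 ∧ -2 ≤ (coeff M.val).2.2.2 := by decide

set_option maxHeartbeats 2000000 in
lemma key_real : ∀ M : SL3, (coeff M.val).2.1 = 0 → (coeff M.val).2.2.1 = 0 →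
    (coeff M.val).2.2.2 = 0 → (coeff M.val).1 = 2 ∨ (coeff M.val).1 = -2 := by decide

lemma key_one : coeff (1 : SL3).val = (2,0,0,0) := by decide

def S3 : SL3 := ⟨I3, by decide⟩

lemma key_S3 : coeff S3.val = (0,2,0,0) := by decide

/-! ### Generic 2×2 matrix algebra -/

variable {F : Type*} [Field F]

/-- Cayley–Hamilton for 2×2 matrices. -/
lemma ch2 (M : Matrix (Fin 2) (Fin 2) F) : M * (M.trace • 1 - M) = M.det • 1 := by
  ext i j
  fin_cases i <;> fin_cases j <;>
    simp [Matrix.mul_apply, Fin.sum_univ_two, Matrix.trace_fin_two, Matrix.det_fin_two,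
      Matrix.one_apply, Matrix.smul_apply] <;> ring

lemma eq_neg_one_of_sq (h2 : (2:F) ≠ 0) {X : Matrix (Fin 2) (Fin 2) F}
    (hdet : X.det = 1) (hsq : X * X = 1) (hne : X ≠ 1) : X = -1 := by
  have h5 := ch2 X
  rw [hdet, one_smul, mul_sub, mul_smul_comm, mul_one, hsq] at h5
  have h6 : X.trace • X = (2:F) • 1 := by linear_combination (norm := module) h5
  have htr : X.trace ≠ 0 := by
    intro h0
    rw [h0, zero_smul] at h6
    have := congrArg (fun M => M 0 0) h6
    simp at this
    exact h2 this.symm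
  have hX : X = (X.trace⁻¹ * 2) • 1 := by
    calc X = X.trace⁻¹ • (X.trace • X) := (inv_smul_smul₀ htr X).symm
      _ = (X.trace⁻¹ * 2) • 1 := by rw [h6, smul_smul]
  set lam := X.trace⁻¹ * 2 with hlam
  have hl2 : lam * lam = 1 := by
    have := hsq
    rw [hX] at this
    have h7 : (lam * lam) • (1 : Matrix (Fin 2) (Fin 2) F) = 1 := by
      rw [← smul_smul]
      simpa [smul_mul_assoc, mul_smul_comm] using this
    have := congrArg (fun M => M 0 0) h7
    simpa using this
  rcases mul_self_eq_one_iff.mp hl2 with h | h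
  · exact absurd (by rw [hX, h, one_smul]) hne
  · rw [hX, h, neg_smul, one_smul]

lemma scalar_zero {G : Matrix (Fin 2) (Fin 2) F} (hns : ∀ a : F, G ≠ a • 1) (x y : F)
    (h : x • (1 : Matrix (Fin 2) (Fin 2) F) + y • G = 0) : x = 0 ∧ y = 0 := by
  by_cases hy : y = 0
  · refine ⟨?_, hy⟩
    rw [hy, zero_smul, add_zero] at h
    have := congrArg (fun M => M 0 0) h
    simpa using this
  · exfalso
    refine hns (-(y⁻¹ * x)) ?_
    have h4 : y • G = -(x • (1 : Matrix (Fin 2) (Fin 2) F)) := eq_neg_of_add_eq_zero_right h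
    calc G = y⁻¹ • (y • G) := (inv_smul_smul₀ hy G).symm
      _ = (-(y⁻¹ * x)) • 1 := by rw [h4, smul_neg, smul_smul, ← neg_smul]

section rel

variable {G H : Matrix (Fin 2) (Fin 2) F}
  (h2 : (2:F) ≠ 0)
  (hG : G * G = -1) (hH : H * H = -1) (hA : G * H = -(H * G))
  (hns : ∀ a : F, G ≠ a • 1)

include h2 hG hH hA hns in
lemma indep (a b c d : F)
    (h : a • 1 + b • G + c • H + d • (G * H) = 0) :
    a = 0 ∧ b = 0 ∧ c = 0 ∧ d = 0 := by
  have hA2 : H * G = -(G * H) := by rw [hA, neg_neg]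
  have hGK : G * (G * H) = -H := by rw [← mul_assoc, hG, neg_one_mul]
  have hKG : (G * H) * G = H := by
    rw [mul_assoc, hA2, mul_neg, ← mul_assoc, hG, neg_one_mul, neg_neg]
  have hKH : (G * H) * H = -G := by rw [mul_assoc, hH, mul_neg_one]
  have expand : G * (a • 1 + b • G + c • H + d • (G*H)) + (a • 1 + b • G + c • H + d • (G*H)) * G
      = (-(2*b)) • 1 + (2*a) • G := by
    simp only [mul_add, add_mul, mul_smul_comm, smul_mul_assoc, mul_one, one_mul,
      hG, hA2, hGK, hKG]
    module
  have e1 : (-(2*b)) • (1 : Matrix (Fin 2) (Fin 2) F) + (2*a) • G = 0 := by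
    rw [← expand, h, mul_zero, zero_mul, add_zero]
  obtain ⟨hb2, ha2⟩ := scalar_zero hns _ _ e1
  have ha : a = 0 := by
    rcases mul_eq_zero.mp ha2 with h' | h'
    · exact absurd h' h2
    · exact h'
  have hb : b = 0 := by
    have : 2 * b = 0 := neg_eq_zero.mp hb2
    rcases mul_eq_zero.mp this with h' | h'
    · exact absurd h' h2
    · exact h'
  rw [ha, hb, zero_smul, zero_smul, zero_add, zero_add] at h
  have expand2 : (c • H + d • (G*H)) * (-H) = c • 1 + d • G := by
    simp only [add_mul, smul_mul_assoc, mul_neg, hH, hKH, neg_neg, smul_neg]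
    module
  have e2 : c • (1 : Matrix (Fin 2) (Fin 2) F) + d • G = 0 := by
    rw [← expand2, h, zero_mul]
  obtain ⟨hc, hd⟩ := scalar_zero hns _ _ e2
  exact ⟨ha, hb, hc, hd⟩

def lin (G H : Matrix (Fin 2) (Fin 2) F) (t : ℤ × ℤ × ℤ × ℤ) : Matrix (Fin 2) (Fin 2) F :=
  (t.1 : F) • 1 + (t.2.1 : F) • G + (t.2.2.1 : F) • H + (t.2.2.2 : F) • (G * H)

include hG hH hA in
lemma lin_mul_lin (s t : ℤ × ℤ × ℤ × ℤ) :
    lin G H s * lin G H t = lin G H (quatMul s t) := by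
  have hA2 : H * G = -(G * H) := by rw [hA, neg_neg]
  have hGK : G * (G * H) = -H := by rw [← mul_assoc, hG, neg_one_mul]
  have hHK : H * (G * H) = G := by
    rw [← mul_assoc, hA2, neg_mul, mul_assoc, hH, mul_neg_one, neg_neg]
  have hKG : (G * H) * G = H := by
    rw [mul_assoc, hA2, mul_neg, ← mul_assoc, hG, neg_one_mul, neg_neg]
  have hKH : (G * H) * H = -G := by rw [mul_assoc, hH, mul_neg_one]
  have hKK : (G * H) * (G * H) = -1 := by rw [mul_assoc, hHK, hG]
  simp only [lin, quatMul, add_mul, mul_add, smul_mul_assoc, mul_smul_comm,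
    hG, hH, hA2, hGK, hHK, hKG, hKH, hKK, one_mul, mul_one, smul_neg]
  push_cast
  module

end rel

lemma exists_anticomm (hsos : ∃ u v : F, u^2 + v^2 = -1)
    {G : Matrix (Fin 2) (Fin 2) F} (htr : G.trace = 0) (hdet : G.det = 1) :
    ∃ H : Matrix (Fin 2) (Fin 2) F, H * H = -1 ∧ G * H = -(H * G) := by
  obtain ⟨u, v, huv⟩ := hsos
  set α := G 0 0 with hα
  set β := G 0 1 with hβd
  set γ := G 1 0 with hγd
  have h11 : G 1 1 = -α := by
    have := htr
    rw [Matrix.trace_fin_two] at this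
    linear_combination this
  have hαβγ : α^2 + β*γ = -1 := by
    have := hdet
    rw [Matrix.det_fin_two, h11] at this
    linear_combination -this
  have main : ∀ x y z : F, 2*α*x + γ*y + β*z = 0 → x^2 + y*z = -1 →
      (!![x, y; z, -x] : Matrix (Fin 2) (Fin 2) F) * !![x, y; z, -x] = -1 ∧
      G * !![x, y; z, -x] = -(!![x, y; z, -x] * G) := by
    intro x y z E1 E2
    constructor
    · ext i j
      fin_cases i <;> fin_cases j <;>
        simp [Matrix.mul_apply, Fin.sum_univ_two, Matrix.one_apply] <;>
        first
          | ring1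
          | linear_combination E2
          | linear_combination -E2
    · ext i j
      fin_cases i <;> fin_cases j <;>
        simp [Matrix.mul_apply, Matrix.vecMul, dotProduct, Matrix.vecHead,
          Matrix.vecTail, Fin.sum_univ_two, h11, ← hα, ← hβd, ← hγd] <;>
        first
          | ring1
          | linear_combination E1
          | linear_combination -E1
  by_cases hB : β ≠ 0
  · have hβinv : β * β⁻¹ = 1 := mul_inv_cancel₀ hB
    refine ⟨_, main (u + α*v) (β*v) (-β⁻¹*(2*α*(u + α*v) + γ*(β*v))) ?_ ?_⟩
    · linear_combination (-(2*α*(u + α*v) + γ*(β*v)))*hβinv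
    · linear_combination huv - v^2*hαβγ - (2*α*u*v + 2*α^2*v^2 + β*γ*v^2)*hβinv
  · push_neg at hB
    have hα2 : α^2 = -1 := by rw [hB] at hαβγ; linear_combination hαβγ
    by_cases hC : γ ≠ 0
    · have hγinv : γ * γ⁻¹ = 1 := mul_inv_cancel₀ hC
      refine ⟨_, main (u + α*v) (-γ⁻¹*(2*α*(u + α*v))) (γ*v) ?_ ?_⟩
      · rw [hB]
        linear_combination (-(2*α*(u + α*v)))*hγinv
      · linear_combination huv - v^2*hα2 - (2*α*v*(u + α*v))*hγinv
    · push_neg at hC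
      refine ⟨_, main 0 1 (-1) ?_ ?_⟩
      · rw [hB, hC]; ring
      · ring

lemma int_small_zero {p : ℕ} (hp3 : 3 ≤ p) {b : ℤ} (hb1 : -2 ≤ b) (hb2 : b ≤ 2)
    (hdvd : (p:ℤ) ∣ b) : b = 0 := by
  by_contra hb
  have h1 : (p:ℤ) ≤ |b| := Int.le_of_dvd (abs_pos.mpr hb) ((dvd_abs _ _).mpr hdvd)
  have h2 : |b| ≤ 2 := abs_le.mpr ⟨hb1, hb2⟩
  have h3 : (3:ℤ) ≤ (p:ℤ) := by exact_mod_cast hp3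
  linarith

end SL2F3Aux

open SL2F3Aux

/-- If g is an element of order 4 in SL(2, F_q), q a power of an odd prime, then
there is a subgroup of SL(2, F_q) containing g which is isomorphic to SL(2, F₃). -/
theorem mem_subgroup_iso_SL2_F3_of_orderOf_eq_four {F : Type*} [Field F] [Fintype F]
    (hq : Odd (Fintype.card F)) (g : Matrix.SpecialLinearGroup (Fin 2) F)
    (hg : orderOf g = 4) :
    ∃ H : Subgroup (Matrix.SpecialLinearGroup (Fin 2) F),
      g ∈ H ∧ Nonempty (H ≃* Matrix.SpecialLinearGroup (Fin 2) (ZMod 3)) := by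
  classical
  -- characteristic facts
  set p := ringChar F with hpdef
  haveI hchar : CharP F p := ringChar.charP F
  have hp : p.Prime := CharP.char_is_prime F p
  have hp2 : p ≠ 2 := by
    intro h
    obtain ⟨n, hpn, hcard⟩ := FiniteField.card F p
    rw [hcard, h] at hq
    exact (Nat.not_odd_iff_even.mpr (Nat.even_pow.mpr ⟨even_iff_two_dvd.mpr dvd_rfl, n.2.ne'⟩)) hq
  have hp3 : 3 ≤ p := by
    rcases hp.two_le.lt_or_eq with h | h
    · omega
    · exact absurd h.symm hp2
  have h2 : (2:F) ≠ 0 := by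
    intro h
    have := (CharP.cast_eq_zero_iff F p 2).mp (by exact_mod_cast h)
    exact hp2 ((Nat.prime_dvd_prime_iff_eq hp Nat.prime_two).mp this)
  -- matrix-level facts about g
  set G : Matrix (Fin 2) (Fin 2) F := g.val with hGdef
  have hdetG : G.det = 1 := g.2
  have hg4 : g ^ 4 = 1 := by rw [← hg]; exact pow_orderOf_eq_one g
  have hg2 : g ^ 2 ≠ 1 := by
    intro h
    have := orderOf_dvd_of_pow_eq_one h
    rw [hg] at this
    omega
  have hGG : G * G = -1 := by
    have hX : ((g^2 : Matrix.SpecialLinearGroup (Fin 2) F) : Matrix (Fin 2) (Fin 2) F) = G * G := by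
      simp [hGdef, pow_two]
    have hXsq : (G * G) * (G * G) = 1 := by
      have : ((g^4 : Matrix.SpecialLinearGroup (Fin 2) F) : Matrix (Fin 2) (Fin 2) F) = 1 := by
        rw [hg4]; simp
    -- (g^4) = (g^2)*(g^2)
      calc (G * G) * (G * G) = ((g^2 * g^2 : Matrix.SpecialLinearGroup (Fin 2) F) : Matrix (Fin 2) (Fin 2) F) := by
            simp [hX]
        _ = 1 := by rw [← pow_add]; norm_num; exact_mod_cast this
    have hXdet : (G * G).det = 1 := by
      rw [← hX]; exact (g^2).2
    have hXne : G * G ≠ 1 := by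
      intro h
      exact hg2 (Subtype.ext (hX.trans h))
    exact eq_neg_one_of_sq h2 hXdet hXsq hXne
  have hns : ∀ a : F, G ≠ a • 1 := by
    intro a hGa
    have hdet : a^2 = 1 := by
      have := hdetG
      rw [hGa, Matrix.det_smul, Matrix.det_one, Fintype.card_fin] at this
      simpa using this
    have hone : G * G = 1 := by
      rw [hGa, smul_mul_assoc, mul_smul_comm, one_mul, smul_smul, ← pow_two, hdet, one_smul]
    rw [hGG] at hone
    have e := congrArg (fun M : Matrix (Fin 2) (Fin 2) F => M 0 0) hone
    simp at e
    exact h2 (by first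
      | linear_combination e
      | linear_combination -e
      | linear_combination (e : (-1:F) = 1)
      | simp_all)
  have htrG : G.trace = 0 := by
    have hch := ch2 G
    rw [hdetG, one_smul, mul_sub, mul_smul_comm, mul_one, hGG] at hch
    have h9 : G.trace • G = 0 := by linear_combination (norm := module) hch
    by_contra htr0
    refine hns 0 ?_
    rw [zero_smul]
    calc G = G.trace⁻¹ • (G.trace • G) := (inv_smul_smul₀ htr0 G).symm
      _ = 0 := by rw [h9, smul_zero]
  -- existence of an anticommuting square root of -1
  haveI : NeZero p := ⟨hp.ne_zero⟩
  have hsos : ∃ u v : F, u^2 + v^2 = -1 := by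
    obtain ⟨u, v, huv⟩ := CharP.sq_add_sq F p (-1)
    exact ⟨u, v, by push_cast at huv; exact huv⟩
  obtain ⟨H, hHH, hAA⟩ := exists_anticomm hsos htrG hdetG
  -- trace facts
  have hA2 : H * G = -(G * H) := by rw [hAA, neg_neg]
  have hGK : G * (G * H) = -H := by rw [← mul_assoc, hGG, neg_one_mul]
  have hKG : (G * H) * G = H := by
    rw [mul_assoc, hA2, mul_neg, ← mul_assoc, hGG, neg_one_mul, neg_neg]
  have htrH : H.trace = 0 := by
    have e : ((G * H) * G).trace = H.trace := by rw [hKG]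
    rw [Matrix.trace_mul_comm, ← mul_assoc, hGG, neg_one_mul, Matrix.trace_neg] at e
    have : (2:F) * H.trace = 0 := by linear_combination -e
    rcases mul_eq_zero.mp this with h' | h'
    · exact absurd h' h2
    · exact h'
  have htrK : (G * H).trace = 0 := by
    have e : (G * H).trace = (H * G).trace := Matrix.trace_mul_comm G H
    rw [hA2, Matrix.trace_neg] at e
    have : (2:F) * (G * H).trace = 0 := by linear_combination e
    rcases mul_eq_zero.mp this with h' | h'
    · exact absurd h' h2
    · exact h'
  -- the embedding map
  set f : SL3 → Matrix (Fin 2) (Fin 2) F :=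
    fun M => (2⁻¹ : F) • lin G H (coeff M.val) with hfdef
  have fmul : ∀ M N : SL3, f M * f N = f (M * N) := by
    intro M N
    have e1 : f M * f N = ((2⁻¹ : F) * 2⁻¹) • (lin G H (coeff M.val) * lin G H (coeff N.val)) := by
      rw [hfdef]
      simp only [smul_mul_assoc, mul_smul_comm, smul_smul]
    rw [e1, lin_mul_lin hGG hHH hAA, key_mul M N]
    have e2 : lin G H (2*(coeff (M*N).val).1, 2*(coeff (M*N).val).2.1,
        2*(coeff (M*N).val).2.2.1, 2*(coeff (M*N).val).2.2.2)
        = (2:F) • lin G H (coeff (M*N).val) := by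
      simp only [lin]
      push_cast
      module
    rw [e2, hfdef]
    simp only [smul_smul]
    congr 1
    field_simp
  have fone : f 1 = 1 := by
    rw [hfdef]
    simp only [key_one, lin]
    push_cast
    simp only [zero_smul, add_zero, smul_smul]
    rw [inv_mul_cancel₀ h2, one_smul]
  have ftr : ∀ M : SL3, (f M).trace = ((coeff M.val).1 : F) := by
    intro M
    rw [hfdef]
    simp only [lin, Matrix.trace_smul, Matrix.trace_add, Matrix.trace_one, Fintype.card_fin,
      htrG, htrH, htrK, smul_eq_mul, mul_zero, add_zero, Matrix.trace_one]
    field_simp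
    ring
  have finv : ∀ M : SL3, (f M).trace • 1 - f M = f M⁻¹ := by
    intro M
    rw [ftr M, hfdef]
    simp only [key_inv, lin]
    push_cast
    match_scalars <;> field_simp <;> try ring1
  have hdetf : ∀ M : SL3, (f M).det = 1 := by
    intro M
    have hch := ch2 (f M)
    rw [finv M, fmul M M⁻¹, mul_inv_cancel, fone] at hch
    have := congrArg (fun M => M 0 0) hch
    simpa using this.symm
  set φ : SL3 →* Matrix.SpecialLinearGroup (Fin 2) F :=
    { toFun := fun M => ⟨f M, hdetf M⟩,
      map_one' := Subtype.ext fone,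
      map_mul' := fun M N => Subtype.ext (fmul M N).symm } with hφdef
  have hker : ∀ P : SL3, φ P = 1 → P = 1 := by
    intro P hP
    have hfP : f P = 1 := congrArg Subtype.val hP
    have hlin : lin G H (coeff P.val) = (2:F) • 1 := by
      have h6 : (2:F) • f P = (2:F) • (1 : Matrix (Fin 2) (Fin 2) F) := by rw [hfP]
      rw [hfdef] at h6
      simpa [smul_smul, mul_inv_cancel₀ h2] using h6
    have hzero : (((coeff P.val).1 : F) - 2) • 1 + ((coeff P.val).2.1 : F) • G
        + ((coeff P.val).2.2.1 : F) • H + ((coeff P.val).2.2.2 : F) • (G * H) = 0 := by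
      rw [sub_smul]
      rw [lin] at hlin
      linear_combination (norm := module) hlin
    obtain ⟨ea, eb, ec, ed⟩ := indep h2 hGG hHH hAA hns _ _ _ _ hzero
    obtain ⟨b1, b2, b3, b4, b5, b6, b7, b8⟩ := key_bound P
    have hb0 : (coeff P.val).2.1 = 0 :=
      int_small_zero hp3 b4 b3 ((CharP.intCast_eq_zero_iff F p _).mp eb)
    have hc0 : (coeff P.val).2.2.1 = 0 :=
      int_small_zero hp3 b6 b5 ((CharP.intCast_eq_zero_iff F p _).mp ec)
    have hd0 : (coeff P.val).2.2.2 = 0 :=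
      int_small_zero hp3 b8 b7 ((CharP.intCast_eq_zero_iff F p _).mp ed)
    have ha2 : ((coeff P.val).1 : F) = 2 := by
      have := sub_eq_zero.mp ea
      exact_mod_cast this
    have ha0 : (coeff P.val).1 = 2 := by
      rcases key_real P hb0 hc0 hd0 with h' | h'
      · exact h'
      · exfalso
        rw [h'] at ha2
        have : ((4:ℤ) : F) = 0 := by push_cast; linear_combination -ha2
        have h4 : (p:ℤ) ∣ 4 := (CharP.intCast_eq_zero_iff F p 4).mp this
        have h4' : p ∣ 4 := by exact_mod_cast h4
        have h5 : p ∣ 2 := hp.dvd_of_dvd_pow (show p ∣ 2^2 from (by norm_num : (4:ℕ) = 2^2) ▸ h4')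
        exact hp2 ((Nat.prime_dvd_prime_iff_eq hp Nat.prime_two).mp h5)
    have : coeff P.val = (2,0,0,0) := by
      rcases hco : coeff P.val with ⟨a', b', c', d'⟩
      rw [hco] at ha0 hb0 hc0 hd0
      simp_all
    exact Subtype.ext (key_inj P 1 (by rw [this, key_one]))
  have hinj : Function.Injective φ := by
    intro M N h
    have h1 : φ (M * N⁻¹) = 1 := by
      rw [_root_.map_mul, _root_.map_inv, h, mul_inv_cancel]
    have := hker _ h1
    have := congrArg (fun x => x * N) this
    simpa using this
  have hS3 : φ S3 = g := by
    apply Subtype.ext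
    show f S3 = G
    rw [hfdef]
    simp only [key_S3, lin]
    push_cast
    match_scalars <;> field_simp <;> try ring1
  refine ⟨φ.range, ⟨S3, hS3⟩, ⟨(MonoidHom.ofInjective hinj).symm⟩⟩
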